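/- Let K be a finite field with s elements, n ≥ 1, V = Fin (n+1) → K, and J = (s^{n+1} − 1)/(s − 1). There exist bijections σ from the set of points of P(n, K) (1-dimensional subspaces of V) to ZMod J and τ from the set of hyperplanes of P(n, K) (n-dimensional subspaces of V) to ZMod J, together with a subset S ⊆ ZMod J, such that for every point P and hyperplane H, P ≤ H if and only if τ(H) − σ(P) ∈ S. (The point–hyperplane incidence bipartite graph of a finite projective space is a circulant balanced bipartite graph.) -/

import Mathlib

open Polynomial Module



private lemma pg_card_splittingField (K : Type*) [Field K] [Fintype K] (d : ℕ) (hd : 1 ≤ d) :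
    Nat.card (X ^ (Fintype.card K ^ d) - X : K[X]).SplittingField = Fintype.card K ^ d := by
  classical
  set q := Fintype.card K ^ d with hq
  set F := (X ^ q - X : K[X]).SplittingField with hFdef
  haveI : Finite F := Module.finite_of_finite K
  haveI instF : Fintype F := Fintype.ofFinite F
  have h2 : 2 ≤ Fintype.card K := Fintype.one_lt_card
  have hq1 : 1 < q := Nat.one_lt_pow (by omega) h2
  obtain ⟨p, hp⟩ := CharP.exists K
  haveI := hp
  obtain ⟨m, hpp, hcard⟩ := FiniteField.card K p
  haveI : Fact p.Prime := ⟨hpp⟩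
  haveI : CharP F p := charP_of_injective_algebraMap' (A := F) K p
  have hpK : p ∣ Fintype.card K := hcard ▸ dvd_pow_self p m.2.ne'
  have hpq : p ∣ q := hpK.trans (dvd_pow_self _ (by omega))
  have hsep : (X ^ q - X : K[X]).Separable := galois_poly_separable p q hpq
  have hdeg : (X ^ q - X : K[X]).natDegree = q := FiniteField.X_pow_card_sub_X_natDegree_eq K hq1
  -- lower bound
  have hge : q ≤ Fintype.card F := by
    have hcr := card_rootSet_eq_natDegree hsep (SplittingField.splits (X ^ q - X : K[X]))
    rw [hdeg] at hcr
    calc q = Fintype.card ((X ^ q - X : K[X]).rootSet F) := hcr.symm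
    _ ≤ Fintype.card F := Fintype.card_le_of_injective _ Subtype.val_injective
  -- all elements satisfy x^q = x
  have hall : ∀ x : F, x ^ q = x := by
    have hqp : q = p ^ (m * d) := by rw [hq, hcard, pow_mul]
    let A : Subalgebra K F :=
      { carrier := {x : F | x ^ q = x}
        mul_mem' := fun {x y} hx hy => by
          simp only [Set.mem_setOf_eq, mul_pow] at *; rw [hx, hy]
        one_mem' := one_pow q
        add_mem' := fun {x y} hx hy => by
          simp only [Set.mem_setOf_eq] at *
          have h := add_pow_char_pow x y p (m * d)
          rw [← hqp] at h
          rw [h, hx, hy]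
        zero_mem' := zero_pow (by omega)
        algebraMap_mem' := fun r => by
          have : r ^ q = r := FiniteField.pow_card_pow d r
          simp only [Set.mem_setOf_eq, ← map_pow, this] }
    have htop : (⊤ : Subalgebra K F) ≤ A := by
      rw [← IsSplittingField.adjoin_rootSet F (X ^ q - X : K[X])]
      rw [Algebra.adjoin_le_iff]
      intro x hx
      have := (mem_rootSet.mp hx).2
      simp only [map_sub, map_pow, aeval_X, sub_eq_zero] at this
      exact this
    intro x
    have hxA : x ∈ A := htop trivial
    exact hxA
  -- upper bound
  have hne : (X ^ q - X : F[X]) ≠ 0 := FiniteField.X_pow_card_sub_X_ne_zero F hq1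
  have hle : Fintype.card F ≤ q := by
    have hsub : (Finset.univ : Finset F) ⊆ (X ^ q - X : F[X]).roots.toFinset := by
      intro x _
      rw [Multiset.mem_toFinset, mem_roots hne]
      simp [IsRoot, sub_eq_zero, hall x]
    calc Fintype.card F = (Finset.univ : Finset F).card := rfl
      _ ≤ (X ^ q - X : F[X]).roots.toFinset.card := Finset.card_le_card hsub
      _ ≤ Multiset.card (X ^ q - X : F[X]).roots := Multiset.toFinset_card_le _
      _ ≤ (X ^ q - X : F[X]).natDegree := card_roots' _
      _ = q := FiniteField.X_pow_card_sub_X_natDegree_eq F hq1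
  have e1 : Nat.card F = Fintype.card F := Nat.card_eq_fintype_card
  omega

section Key
variable {K F : Type*} [Field K] [Fintype K] [Field F] [Fintype F] [Algebra K F]

private lemma pg_key (s n J : ℕ) (hs : Fintype.card K = s) (hn : 1 ≤ n)
    (hrank : Module.finrank K F = n + 1) (hJ : J = (s ^ (n + 1) - 1) / (s - 1)) :
    ∃ (σ : {P : Submodule K F // Module.finrank K P = 1} → ZMod J)
      (τ : {H : Submodule K F // Module.finrank K H = n} → ZMod J)
      (S : Set (ZMod J)),
      Function.Bijective σ ∧ Function.Bijective τ ∧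
      ∀ (P : {P : Submodule K F // Module.finrank K P = 1})
        (H : {H : Submodule K F // Module.finrank K H = n}),
        (P : Submodule K F) ≤ (H : Submodule K F) ↔ τ H - σ P ∈ S := by
  classical
  have hs2 : 2 ≤ s := hs ▸ Fintype.one_lt_card
  have hcardF : Fintype.card F = s ^ (n + 1) := by
    have := Module.card_fintype (Module.finBasis K F)
    rwa [Fintype.card_fin, hrank, hs] at this
  have hdvd : (s - 1) ∣ (s ^ (n + 1) - 1) := by
    have := Nat.sub_dvd_pow_sub_pow s 1 (n + 1)
    rwa [one_pow] at this
  have hJN : J * (s - 1) = s ^ (n + 1) - 1 := by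
    rw [hJ]; exact Nat.div_mul_cancel hdvd
  have hNpos : 0 < s ^ (n + 1) - 1 := by
    have : s ≤ s ^ (n + 1) := Nat.le_self_pow (by omega) s
    omega
  have hJpos : 0 < J := by
    rcases Nat.eq_zero_or_pos J with h | h
    · rw [h, zero_mul] at hJN; omega
    · exact h
  haveI : NeZero J := ⟨hJpos.ne'⟩
  -- generator of Fˣ
  obtain ⟨g, hg⟩ := IsCyclic.exists_generator (α := Fˣ)
  have horder : orderOf g = s ^ (n + 1) - 1 := by
    rw [orderOf_eq_card_of_forall_mem_zpowers hg, Nat.card_eq_fintype_card,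
      Fintype.card_units, hcardF]
  have hexpo : ∀ x : Fˣ, ∃ k : ℕ, g ^ k = x := fun x =>
    Submonoid.mem_powers_iff x g |>.mp (mem_powers_iff_mem_zpowers.mpr (hg x))
  have hgF : (g : F) ≠ 0 := Units.ne_zero g
  have hgpow_ne : ∀ k : ℕ, (g : F) ^ k ≠ 0 := fun k => pow_ne_zero k hgF
  -- discrete log
  let E : F → ℕ := fun x => if hx : x = 0 then 0 else (hexpo (Units.mk0 x hx)).choose
  have hE : ∀ (x : F) (hx : x ≠ 0), (g : F) ^ E x = x := by
    intro x hx
    have h := (hexpo (Units.mk0 x hx)).choose_spec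
    have := congrArg (Units.val) h
    simpa [E, dif_neg hx] using this
  -- lemma A : nonzero scalars are powers of g^J
  have lemA : ∀ c : K, c ≠ 0 → ∃ t : ℕ, algebraMap K F c = (g : F) ^ (J * t) := by
    intro c hc
    have hcF : algebraMap K F c ≠ 0 := by
      simpa using (algebraMap K F).injective.ne (a₂ := 0) hc
    obtain ⟨k, hk⟩ := hexpo (Units.mk0 _ hcF)
    have hk' : (g : F) ^ k = algebraMap K F c := by
      have := congrArg Units.val hk
      simpa using this
    have hcs : (algebraMap K F c) ^ (s - 1) = 1 := by
      rw [← map_pow]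
      have : c ^ (s - 1) = 1 := by
        have := FiniteField.pow_card_sub_one_eq_one c hc
        rwa [hs] at this
      rw [this, map_one]
    have hgk : g ^ (k * (s - 1)) = 1 := by
      apply Units.ext
      push_cast [pow_mul]
      rw [hk', hcs]
    have hdvd2 : (s ^ (n + 1) - 1) ∣ k * (s - 1) := horder ▸ orderOf_dvd_of_pow_eq_one hgk
    rw [← hJN] at hdvd2
    have hJk : J ∣ k := (Nat.mul_dvd_mul_iff_right (by omega : 0 < s - 1)).mp hdvd2
    obtain ⟨t, rfl⟩ := hJk
    exact ⟨t, hk'.symm⟩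
  -- lemma B : powers of g^J are scalars
  have lemB : ∀ t : ℕ, ∃ c : K, c ≠ 0 ∧ (g : F) ^ (J * t) = algebraMap K F c := by
    intro t
    have hx1 : ((g : F) ^ (J * t)) ^ (s - 1) = 1 := by
      rw [← pow_mul]
      have he : J * t * (s - 1) = (s ^ (n + 1) - 1) * t := by
        rw [mul_right_comm, hJN]
      rw [he]
      have h1 : g ^ ((s ^ (n + 1) - 1) * t) = 1 := by
        rw [pow_mul, ← horder, pow_orderOf_eq_one, one_pow]
      have := congrArg Units.val h1
      simpa using this
    have hxs : ((g : F) ^ (J * t)) ^ s = (g : F) ^ (J * t) := by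
      have h1 : s - 1 + 1 = s := by omega
      calc ((g : F) ^ (J * t)) ^ s = ((g : F) ^ (J * t)) ^ (s - 1) * ((g : F) ^ (J * t)) := by
            rw [← pow_succ, h1]
        _ = (g : F) ^ (J * t) := by rw [hx1, one_mul]
    -- roots of X^s - X in F are exactly the image of K
    have hne : (X ^ s - X : F[X]) ≠ 0 := FiniteField.X_pow_card_sub_X_ne_zero F hs2
    have himg : (Finset.univ.image (algebraMap K F)) ⊆ (X ^ s - X : F[X]).roots.toFinset := by
      intro y hy
      obtain ⟨c, _, rfl⟩ := Finset.mem_image.mp hy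
      rw [Multiset.mem_toFinset, mem_roots hne]
      have hcs : c ^ s = c := by
        have := FiniteField.pow_card c
        rwa [hs] at this
      simp [IsRoot, sub_eq_zero, ← map_pow, hcs]
    have hcards : (X ^ s - X : F[X]).roots.toFinset.card ≤ s :=
      le_trans (Multiset.toFinset_card_le _)
        (le_trans (card_roots' _) (le_of_eq (FiniteField.X_pow_card_sub_X_natDegree_eq F hs2)))
    have hcardimg : (Finset.univ.image (algebraMap K F)).card = s := by
      rw [Finset.card_image_of_injective _ (algebraMap K F).injective, Finset.card_univ, hs]
    have heq : (X ^ s - X : F[X]).roots.toFinset = Finset.univ.image (algebraMap K F) :=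
      (Finset.eq_of_subset_of_card_le himg (by omega)).symm
    have hxmem : (g : F) ^ (J * t) ∈ (X ^ s - X : F[X]).roots.toFinset := by
      rw [Multiset.mem_toFinset, mem_roots hne]
      simp [IsRoot, sub_eq_zero, hxs]
    rw [heq] at hxmem
    obtain ⟨c, _, hc⟩ := Finset.mem_image.mp hxmem
    refine ⟨c, ?_, hc.symm⟩
    intro h0
    rw [h0, map_zero] at hc
    exact hgpow_ne _ hc.symm
  -- modular equivalence of exponents ↔ scalar relation
  have lemModRev : ∀ (k m : ℕ) (c : K), c ≠ 0 → (g : F) ^ k = algebraMap K F c * (g : F) ^ m →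
      (k : ZMod J) = (m : ZMod J) := by
    intro k m c hc hkm
    obtain ⟨t, ht⟩ := lemA c hc
    rw [ht, ← pow_add] at hkm
    have hu : g ^ k = g ^ (J * t + m) := by
      apply Units.ext; push_cast; exact hkm
    have hmod : k ≡ (J * t + m) [MOD orderOf g] := pow_eq_pow_iff_modEq.mp hu
    have hJdvd : J ∣ orderOf g := horder ▸ ⟨s - 1, hJN.symm⟩
    have hmodJ : k ≡ (J * t + m) [MOD J] := hmod.of_dvd hJdvd
    have : (J * t + m) ≡ m [MOD J] := by
      show (J * t + m) % J = m % J
      rw [add_comm]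
      exact Nat.add_mul_mod_self_left m J t
    rw [ZMod.natCast_eq_natCast_iff]
    exact hmodJ.trans this
  have lemMod : ∀ (k m : ℕ), (k : ZMod J) = (m : ZMod J) →
      ∃ c : K, c ≠ 0 ∧ (g : F) ^ k = algebraMap K F c * (g : F) ^ m := by
    intro k m h
    have hmod : k ≡ m [MOD J] := (ZMod.natCast_eq_natCast_iff _ _ _).mp h
    rcases le_total m k with hle | hle
    · obtain ⟨t, ht⟩ := (Nat.modEq_iff_dvd' hle).mp hmod.symm
      have hk : k = m + J * t := by omega
      obtain ⟨c, hc0, hc⟩ := lemB t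
      exact ⟨c, hc0, by rw [hk, pow_add, hc, mul_comm]⟩
    · obtain ⟨t, ht⟩ := (Nat.modEq_iff_dvd' hle).mp hmod
      have hm : m = k + J * t := by omega
      obtain ⟨c, hc0, hc⟩ := lemB t
      refine ⟨c⁻¹, inv_ne_zero hc0, ?_⟩
      have hcF : algebraMap K F c ≠ 0 := by
        simpa using (algebraMap K F).injective.ne (a₂ := 0) hc0
      rw [hm, pow_add, hc, map_inv₀]
      field_simp
  -- combined iff
  have hEk : ∀ (x : F) (hx : x ≠ 0) (k : ℕ), x = (g : F) ^ k → (E x : ZMod J) = (k : ZMod J) := by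
    intro x hx k hxk
    apply lemModRev _ _ 1 one_ne_zero
    rw [map_one, one_mul, hE x hx, hxk]
  have hEcast : ∀ (x y : F) (hx : x ≠ 0) (hy : y ≠ 0),
      ((E x : ZMod J) = (E y : ZMod J)) ↔ ∃ c : K, c ≠ 0 ∧ x = algebraMap K F c * y := by
    intro x y hx hy
    constructor
    · intro h
      obtain ⟨c, hc0, hc⟩ := lemMod _ _ h
      exact ⟨c, hc0, by rw [← hE x hx, ← hE y hy]; exact hc⟩
    · rintro ⟨c, hc0, hc⟩
      exact lemModRev _ _ c hc0 (by rw [hE x hx, hE y hy]; exact hc)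
  -- points
  have hptv : ∀ P : {P : Submodule K F // Module.finrank K P = 1},
      ∃ v : F, v ≠ 0 ∧ (P : Submodule K F) = Submodule.span K {v} := by
    rintro ⟨P, hP⟩
    have hPbot : P ≠ ⊥ := by
      intro h
      rw [h, finrank_bot] at hP
      omega
    obtain ⟨v, hvP, hv0⟩ : ∃ v ∈ P, v ≠ 0 := by
      by_contra h
      push_neg at h
      exact hPbot ((Submodule.eq_bot_iff P).mpr h)
    refine ⟨v, hv0, ?_⟩
    symm
    apply Submodule.eq_of_le_of_finrank_eq
    · rwa [Submodule.span_singleton_le_iff_mem]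
    · rw [finrank_span_singleton hv0, hP]
  let v : {P : Submodule K F // Module.finrank K P = 1} → F := fun P => (hptv P).choose
  have hv0 : ∀ P, v P ≠ 0 := fun P => (hptv P).choose_spec.1
  have hvsp : ∀ P : {P : Submodule K F // Module.finrank K P = 1},
      P.1 = Submodule.span K {v P} := fun P => (hptv P).choose_spec.2
  let σ : {P : Submodule K F // Module.finrank K P = 1} → ZMod J := fun P => (E (v P) : ZMod J)
  have hσinj : Function.Injective σ := by
    intro P Q h
    obtain ⟨c, hc0, hc⟩ := (hEcast _ _ (hv0 P) (hv0 Q)).mp h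
    apply Subtype.ext
    rw [hvsp P, hvsp Q, hc, ← Algebra.smul_def]
    exact Submodule.span_singleton_smul_eq (IsUnit.mk0 c hc0) _
  have hσsurj : Function.Surjective σ := by
    intro j
    refine ⟨⟨Submodule.span K {(g : F) ^ j.val}, finrank_span_singleton (hgpow_ne _)⟩, ?_⟩
    set P : {P : Submodule K F // Module.finrank K P = 1} :=
      ⟨Submodule.span K {(g : F) ^ j.val}, finrank_span_singleton (hgpow_ne _)⟩ with hPdef
    have hvP : v P ∈ Submodule.span K {(g : F) ^ j.val} := by
      have h1 : v P ∈ Submodule.span K {v P} := Submodule.mem_span_singleton_self _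
      rwa [← hvsp P, hPdef] at h1
    obtain ⟨c, hc⟩ := Submodule.mem_span_singleton.mp hvP
    have hc0 : c ≠ 0 := by
      intro h0
      apply hv0 P
      rw [← hc, h0, zero_smul]
    have : (E (v P) : ZMod J) = (E ((g : F) ^ j.val) : ZMod J) :=
      (hEcast _ _ (hv0 P) (hgpow_ne _)).mpr
        ⟨c, hc0, by rw [← hc, Algebra.smul_def]⟩
    show (E (v P) : ZMod J) = j
    rw [this, hEk _ (hgpow_ne _) j.val rfl, ZMod.natCast_val, ZMod.cast_id]
  -- hyperplanes
  have hfrpos : 0 < Module.finrank K F := by omega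
  let B := Module.finBasis K F
  let i0 : Fin (Module.finrank K F) := ⟨0, hfrpos⟩
  let φ0 : F →ₗ[K] K := B.coord i0
  have hφ0 : φ0 (B i0) = 1 := by simp [φ0, Basis.coord_apply]
  let Φ : F → (F →ₗ[K] K) := fun a => φ0 ∘ₗ LinearMap.mulLeft K a
  have hΦ : ∀ a x : F, Φ a x = φ0 (a * x) := fun a x => rfl
  have hΦ0 : ∀ a : F, Φ a = 0 → a = 0 := by
    intro a ha
    by_contra h0
    have h1 : Φ a (a⁻¹ * B i0) = 0 := by rw [ha]; rfl
    rw [hΦ, ← mul_assoc, mul_inv_cancel₀ h0, one_mul, hφ0] at h1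
    exact one_ne_zero h1
  let ΦL : F →ₗ[K] (F →ₗ[K] K) :=
    { toFun := Φ
      map_add' := by
        intro a b
        apply LinearMap.ext
        intro x
        simp only [hΦ, LinearMap.add_apply, add_mul, map_add]
      map_smul' := by
        intro c a
        apply LinearMap.ext
        intro x
        simp only [hΦ, RingHom.id_apply, LinearMap.smul_apply, smul_mul_assoc, map_smul] }
  have hΦLinj : Function.Injective ΦL := by
    intro a b hab
    have : Φ (a - b) = 0 := by
      have h1 : ΦL (a - b) = ΦL a - ΦL b := map_sub _ _ _
      have h2 : ΦL a - ΦL b = 0 := by rw [hab, sub_self]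
      rw [← h1] at h2
      exact h2
    exact sub_eq_zero.mp (hΦ0 _ this)
  have hΦLsurj : Function.Surjective ΦL := by
    have hd : Module.finrank K F = Module.finrank K (F →ₗ[K] K) :=
      (Subspace.dual_finrank_eq (K := K) (V := F)).symm
    exact (LinearMap.injective_iff_surjective_of_finrank_eq_finrank hd).mp hΦLinj
  have hΦne : ∀ a : F, a ≠ 0 → ∃ x : F, Φ a x ≠ 0 := by
    intro a ha
    refine ⟨a⁻¹ * B i0, ?_⟩
    rw [hΦ, ← mul_assoc, mul_inv_cancel₀ ha, one_mul, hφ0]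
    exact one_ne_zero
  have hkerrank : ∀ a : F, a ≠ 0 → Module.finrank K (LinearMap.ker (Φ a)) = n := by
    intro a ha
    have h1 := LinearMap.finrank_range_add_finrank_ker (Φ a)
    have hne : LinearMap.range (Φ a) ≠ ⊥ := by
      obtain ⟨x, hx⟩ := hΦne a ha
      intro h
      have : Φ a x ∈ LinearMap.range (Φ a) := LinearMap.mem_range_self _ x
      rw [h, Submodule.mem_bot] at this
      exact hx this
    have hr0 : Module.finrank K (LinearMap.range (Φ a)) ≠ 0 := by
      intro h
      exact hne (Submodule.finrank_eq_zero.mp h)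
    have hr1 : Module.finrank K (LinearMap.range (Φ a)) ≤ 1 := by
      have := Submodule.finrank_le (LinearMap.range (Φ a))
      rwa [Module.finrank_self] at this
    rw [hrank] at h1
    omega
  have hhyp : ∀ H : {H : Submodule K F // Module.finrank K H = n},
      ∃ a : F, a ≠ 0 ∧ H.1 = LinearMap.ker (Φ a) := by
    rintro ⟨H, hH⟩
    have hHtop : H < ⊤ := by
      rcases lt_or_eq_of_le (le_top : H ≤ ⊤) with h | h
      · exact h
      · exfalso
        rw [h, finrank_top, hrank] at hH
        omega
    obtain ⟨ψ, hψ0, hψ⟩ := Submodule.exists_le_ker_of_lt_top H hHtop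
    obtain ⟨a, ha⟩ := hΦLsurj ψ
    have ha0 : a ≠ 0 := by
      intro h0
      apply hψ0
      rw [← ha, h0]
      apply LinearMap.ext
      intro x
      simp only [LinearMap.zero_apply]
      show Φ 0 x = 0
      rw [hΦ, zero_mul, map_zero]
    refine ⟨a, ha0, ?_⟩
    have hΦa : Φ a = ψ := ha
    apply Submodule.eq_of_le_of_finrank_eq
    · rw [hΦa]; exact hψ
    · rw [hkerrank a ha0, hH]
  have hkerinj : ∀ a b : F, a ≠ 0 → b ≠ 0 →
      LinearMap.ker (Φ a) = LinearMap.ker (Φ b) →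
      ∃ c : K, c ≠ 0 ∧ a = algebraMap K F c * b := by
    intro a b ha hb hker
    obtain ⟨y0, hy0⟩ := hΦne b hb
    set y := (Φ b y0)⁻¹ • y0 with hydef
    have hby : Φ b y = 1 := by
      rw [hydef, map_smul, smul_eq_mul, inv_mul_cancel₀ hy0]
    set c := Φ a y with hcdef
    have hprop : ∀ x : F, Φ a x = c * Φ b x := by
      intro x
      have hmem : x - (Φ b x) • y ∈ LinearMap.ker (Φ b) := by
        rw [LinearMap.mem_ker, map_sub, map_smul, hby, smul_eq_mul, mul_one, sub_self]
      rw [← hker, LinearMap.mem_ker, map_sub, map_smul, sub_eq_zero, smul_eq_mul] at hmem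
      rw [hmem, hcdef, mul_comm]
    have heqΦ : ΦL a = ΦL (algebraMap K F c * b) := by
      apply LinearMap.ext
      intro x
      show Φ a x = Φ (algebraMap K F c * b) x
      rw [hΦ, hΦ, mul_assoc, ← Algebra.smul_def, map_smul, smul_eq_mul, ← hΦ, hprop]
      rfl
    have hc0 : c ≠ 0 := by
      intro h0
      apply ha
      apply hΦ0
      apply LinearMap.ext
      intro x
      rw [hprop x, h0, zero_mul]
      rfl
    exact ⟨c, hc0, hΦLinj heqΦ⟩
  -- τ
  let a : {H : Submodule K F // Module.finrank K H = n} → F := fun H => (hhyp H).choose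
  have ha0 : ∀ H, a H ≠ 0 := fun H => (hhyp H).choose_spec.1
  have haker : ∀ H : {H : Submodule K F // Module.finrank K H = n},
      H.1 = LinearMap.ker (Φ (a H)) := fun H => (hhyp H).choose_spec.2
  let τ : {H : Submodule K F // Module.finrank K H = n} → ZMod J :=
    fun H => -(E (a H) : ZMod J)
  have hφscale : ∀ x y : F, (∃ c : K, c ≠ 0 ∧ x = algebraMap K F c * y) →
      (φ0 x = 0 ↔ φ0 y = 0) := by
    rintro x y ⟨c, hc0, rfl⟩
    rw [← Algebra.smul_def, map_smul, smul_eq_mul, mul_eq_zero]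
    simp [hc0]
  have hφmod : ∀ k m : ℕ, (k : ZMod J) = (m : ZMod J) →
      (φ0 ((g : F) ^ k) = 0 ↔ φ0 ((g : F) ^ m) = 0) :=
    fun k m h => hφscale _ _ (lemMod k m h)
  have hkerext : ∀ x y : F, (∃ c : K, c ≠ 0 ∧ x = algebraMap K F c * y) →
      LinearMap.ker (Φ x) = LinearMap.ker (Φ y) := by
    rintro x y ⟨c, hc0, rfl⟩
    ext z
    rw [LinearMap.mem_ker, LinearMap.mem_ker, hΦ, hΦ, mul_assoc]
    exact hφscale _ _ ⟨c, hc0, rfl⟩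
  have hτinj : Function.Injective τ := by
    intro H H' h
    have h' : (E (a H) : ZMod J) = (E (a H') : ZMod J) := by
      simpa [τ, neg_inj] using h
    obtain ⟨c, hc0, hc⟩ := (hEcast _ _ (ha0 H) (ha0 H')).mp h'
    apply Subtype.ext
    rw [haker H, haker H']
    exact hkerext _ _ ⟨c, hc0, hc⟩
  have hτsurj : Function.Surjective τ := by
    intro j
    set b : F := (g : F) ^ (ZMod.val (-j)) with hbdef
    refine ⟨⟨LinearMap.ker (Φ b), hkerrank b (hgpow_ne _)⟩, ?_⟩
    set H : {H : Submodule K F // Module.finrank K H = n} :=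
      ⟨LinearMap.ker (Φ b), hkerrank b (hgpow_ne _)⟩ with hHdef
    have hker2 : LinearMap.ker (Φ (a H)) = LinearMap.ker (Φ b) := by
      rw [← haker H]
    obtain ⟨c, hc0, hc⟩ := hkerinj _ _ (ha0 H) (hgpow_ne _) hker2
    have h1 : (E (a H) : ZMod J) = (E b : ZMod J) :=
      (hEcast _ _ (ha0 H) (hgpow_ne _)).mpr ⟨c, hc0, hc⟩
    have h2 : (E b : ZMod J) = ((ZMod.val (-j) : ℕ) : ZMod J) :=
      hEk b (hgpow_ne _) _ rfl
    show -(E (a H) : ZMod J) = j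
    rw [h1, h2, ZMod.natCast_val, ZMod.cast_id, neg_neg]
  -- the connection set
  refine ⟨σ, τ, {j : ZMod J | φ0 ((g : F) ^ (ZMod.val (-j))) = 0},
    ⟨hσinj, hσsurj⟩, ⟨hτinj, hτsurj⟩, ?_⟩
  intro P H
  have hlhs : P.1 ≤ H.1 ↔ φ0 (a H * v P) = 0 := by
    rw [hvsp P, haker H, Submodule.span_singleton_le_iff_mem, LinearMap.mem_ker, hΦ]
  set k : ℕ := E (a H) + E (v P) with hkdef
  have hmul : a H * v P = (g : F) ^ k := by
    rw [hkdef, pow_add, hE _ (ha0 H), hE _ (hv0 P)]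
  have hneg : -(τ H - σ P) = ((k : ℕ) : ZMod J) := by
    show -(-(E (a H) : ZMod J) - (E (v P) : ZMod J)) = _
    push_cast [hkdef]
    ring
  have hval : ((ZMod.val (-(τ H - σ P)) : ℕ) : ZMod J) = ((k : ℕ) : ZMod J) := by
    rw [ZMod.natCast_val, ZMod.cast_id, hneg]
  show P.1 ≤ H.1 ↔ _
  rw [hlhs, hmul, Set.mem_setOf_eq]
  exact (hφmod _ _ hval).symm

end Key

/-- The point–hyperplane incidence bipartite graph of a finite projective space
is a circulant balanced bipartite graph: with `J = (s^(n+1) - 1)/(s - 1)` there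
exist bijections `σ` (from points, the 1-dimensional subspaces of
`V = Fin (n+1) → K`, to `ZMod J`) and `τ` (from hyperplanes, the `n`-dimensional
subspaces, to `ZMod J`) and a subset `S ⊆ ZMod J` such that `P ≤ H` iff
`τ(H) - σ(P) ∈ S`. -/
theorem pg_bipartite_graph_circulant (K : Type*) [Field K] [Fintype K]
    (s n J : ℕ) (hs : Fintype.card K = s) (hn : 1 ≤ n)
    (hJ : J = (s ^ (n + 1) - 1) / (s - 1)) :
    ∃ (σ : {P : Submodule K (Fin (n + 1) → K) // Module.finrank K P = 1} → ZMod J)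
      (τ : {H : Submodule K (Fin (n + 1) → K) // Module.finrank K H = n} → ZMod J)
      (S : Set (ZMod J)),
      Function.Bijective σ ∧ Function.Bijective τ ∧
      ∀ (P : {P : Submodule K (Fin (n + 1) → K) // Module.finrank K P = 1})
        (H : {H : Submodule K (Fin (n + 1) → K) // Module.finrank K H = n}),
        (P : Submodule K (Fin (n + 1) → K)) ≤ (H : Submodule K (Fin (n + 1) → K)) ↔
          τ H - σ P ∈ S := by
  classical
  subst hs
  set F := (Polynomial.X ^ (Fintype.card K ^ (n + 1)) - Polynomial.X : Polynomial K).SplittingField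
    with hFdef
  haveI : FiniteDimensional K F := inferInstance
  haveI : Finite F := Module.finite_of_finite K
  haveI instF : Fintype F := Fintype.ofFinite F
  have hs2 : 2 ≤ Fintype.card K := Fintype.one_lt_card
  have hcard : Nat.card F = Fintype.card K ^ (n + 1) :=
    pg_card_splittingField K (n + 1) (by omega)
  have hcardF : Fintype.card F = Fintype.card K ^ (n + 1) := by
    rw [Fintype.card_eq_nat_card, hcard]
  have hrank : Module.finrank K F = n + 1 := by
    have hb := Module.card_fintype (Module.finBasis K F)
    rw [Fintype.card_fin, hcardF] at hb
    exact (Nat.pow_right_injective hs2 hb).symm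
  obtain ⟨σF, τF, S, hσ, hτ, hinc⟩ := pg_key (K := K) (F := F) (Fintype.card K) n J rfl hn hrank hJ
  -- transport along a linear equivalence
  have hVrank : Module.finrank K (Fin (n + 1) → K) = n + 1 := by
    rw [Module.finrank_pi, Fintype.card_fin]
  let eqv : (Fin (n + 1) → K) ≃ₗ[K] F :=
    LinearEquiv.ofFinrankEq _ _ (by rw [hVrank, hrank])
  let o : Submodule K (Fin (n + 1) → K) ≃o Submodule K F := Submodule.orderIsoMapComap eqv
  have ho : ∀ p : Submodule K (Fin (n + 1) → K),
      Module.finrank K (o p) = Module.finrank K p := fun p => eqv.finrank_map_eq p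
  have hosymm : ∀ q : Submodule K F, Module.finrank K (o.symm q) = Module.finrank K q := by
    intro q
    conv_rhs => rw [← o.apply_symm_apply q]
    rw [ho]
  let ePt : {P : Submodule K (Fin (n + 1) → K) // Module.finrank K P = 1} →
      {P : Submodule K F // Module.finrank K P = 1} :=
    fun P => ⟨o P.1, by rw [ho]; exact P.2⟩
  let eHy : {H : Submodule K (Fin (n + 1) → K) // Module.finrank K H = n} →
      {H : Submodule K F // Module.finrank K H = n} :=
    fun H => ⟨o H.1, by rw [ho]; exact H.2⟩
  have hePt : Function.Bijective ePt := by
    constructor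
    · intro P Q h
      apply Subtype.ext
      have := congrArg Subtype.val h
      exact o.injective this
    · intro Q
      refine ⟨⟨o.symm Q.1, by rw [hosymm]; exact Q.2⟩, ?_⟩
      apply Subtype.ext
      exact o.apply_symm_apply Q.1
  have heHy : Function.Bijective eHy := by
    constructor
    · intro P Q h
      apply Subtype.ext
      have := congrArg Subtype.val h
      exact o.injective this
    · intro Q
      refine ⟨⟨o.symm Q.1, by rw [hosymm]; exact Q.2⟩, ?_⟩
      apply Subtype.ext
      exact o.apply_symm_apply Q.1
  refine ⟨σF ∘ ePt, τF ∘ eHy, S, hσ.comp hePt, hτ.comp heHy, ?_⟩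
  intro P H
  have h1 : P.1 ≤ H.1 ↔ (ePt P).1 ≤ (eHy H).1 := (o.le_iff_le).symm
  exact h1.trans (hinc (ePt P) (eHy H))
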